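/- Let S be a semigroup, A an abelian group, and α a left action of S on A by endomorphisms. Let n ≥ 1, let F_1, …, F_n ⊆ S be nonempty finite subsets, let C_1, …, C_n be finite subgroups of A, and let B_1, …, B_n be subgroups of A. Then T_{F_i}(α,B_i) is a subgroup of A for each i, the sum B = T_{F_1}(α,B_1) + ⋯ + T_{F_n}(α,B_n) is a subgroup of A, and the image of T_{F_1}(α,C_1) + ⋯ + T_{F_n}(α,C_n) under the canonical projection A → A/B is finite with ℓ(T_{F_1}(α,C_1) + ⋯ + T_{F_n}(α,C_n), B) ≤ ∑_{i=1}^n |F_i| · ℓ(C_i, B_i). -/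

import Mathlib

open Pointwise

/-- The trajectory `T_F(α, X) = ∑_{s ∈ F} α(s)(X)` (iterated pointwise sumset). -/
def trajSet {S A : Type*} [AddCommGroup A] (α : S → A →+ A) (F : Finset S) (X : Set A) :
    Set A :=
  ∑ s ∈ F, (⇑(α s) '' X)

section Aux

variable {A : Type*} [AddCommGroup A]

lemma aux_zero : (0 : Set A) = {0} := rfl

lemma aux_sum_coe_subgroups {ι : Type*} (F : Finset ι) (hF : F.Nonempty)
    (H : ι → AddSubgroup A) :
    ∑ s ∈ F, (H s : Set A) = ((⨆ s ∈ F, H s : AddSubgroup A) : Set A) := by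
  classical
  induction hF using Finset.Nonempty.cons_induction with
  | singleton a => simp
  | cons a F ha hF ih =>
    rw [Finset.sum_cons, ih, Finset.cons_eq_insert]
    have : (⨆ s ∈ (insert a F : Finset ι), H s : AddSubgroup A)
        = H a ⊔ ⨆ s ∈ F, H s := by
      simp [Finset.mem_insert, iSup_or, iSup_sup_eq]
    rw [this, AddSubgroup.add_normal]

lemma aux_image_sum {B : Type*} [AddCommGroup B] (f : A →+ B) {ι : Type*}
    (F : Finset ι) (g : ι → Set A) :
    ⇑f '' (∑ s ∈ F, g s) = ∑ s ∈ F, ⇑f '' g s := by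
  classical
  induction F using Finset.induction with
  | empty => simp [aux_zero]
  | insert _ _ ha ih => rw [Finset.sum_insert ha, Finset.sum_insert ha, Set.image_add, ih]

lemma aux_finite_sum {ι : Type*} (F : Finset ι) (g : ι → Set A)
    (h : ∀ s ∈ F, (g s).Finite) : (∑ s ∈ F, g s).Finite := by
  classical
  induction F using Finset.induction with
  | empty => simp [aux_zero]
  | @insert a F ha ih =>
    rw [Finset.sum_insert ha]
    exact (h a (Finset.mem_insert_self a F)).add
      (ih fun s hs => h s (Finset.mem_insert_of_mem hs))

lemma aux_nonempty_sum {ι : Type*} (F : Finset ι) (g : ι → Set A)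
    (h : ∀ s ∈ F, (g s).Nonempty) : (∑ s ∈ F, g s).Nonempty := by
  classical
  induction F using Finset.induction with
  | empty => exact ⟨0, by simp [aux_zero]⟩
  | @insert a F ha ih =>
    rw [Finset.sum_insert ha]
    exact (h a (Finset.mem_insert_self a F)).add
      (ih fun s hs => h s (Finset.mem_insert_of_mem hs))

lemma aux_card_sum_le {ι : Type*} (F : Finset ι) (g : ι → Set A) :
    Nat.card (∑ s ∈ F, g s : Set A) ≤ ∏ s ∈ F, Nat.card (g s) := by
  classical
  induction F using Finset.induction with
  | empty => simp [aux_zero]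
  | @insert a F ha ih =>
    rw [Finset.sum_insert ha, Finset.prod_insert ha]
    exact (Set.natCard_add_le).trans (Nat.mul_le_mul_left _ ih)

end Aux

/-- each `T_{F_i}(α,B_i)` is a subgroup, their sum is the subgroup
`Bsup = ⨆_i ⨆_{s ∈ F_i} (B_i).map (α s)`, and the image of
`T_{F_1}(α,C_1) + ⋯ + T_{F_n}(α,C_n)` in `A ⧸ Bsup` is finite with
`ℓ(∑ T_{F_i}(α,C_i), Bsup) ≤ ∑ |F_i| · ℓ(C_i, B_i)`. -/
theorem stmt17 {S A : Type*} [Semigroup S] [AddCommGroup A]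
    (α : S → A →+ A) (hα : ∀ s t : S, α (s * t) = (α s).comp (α t))
    (n : ℕ) (hn : 1 ≤ n)
    (F : Fin n → Finset S) (hF : ∀ i, (F i).Nonempty)
    (C : Fin n → AddSubgroup A) (hC : ∀ i, (C i : Set A).Finite)
    (B : Fin n → AddSubgroup A)
    (Bsup : AddSubgroup A) (hBsup : Bsup = ⨆ i, ⨆ s ∈ F i, (B i).map (α s)) :
    (∀ i, trajSet α (F i) ((B i : Set A))
        = ((⨆ s ∈ F i, (B i).map (α s) : AddSubgroup A) : Set A)) ∧
    ((∑ i, trajSet α (F i) ((B i : Set A))) = (Bsup : Set A)) ∧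
    (⇑(QuotientAddGroup.mk' Bsup) '' (∑ i, trajSet α (F i) ((C i : Set A)))).Finite ∧
    Real.log (Nat.card
        ↥(⇑(QuotientAddGroup.mk' Bsup) '' (∑ i, trajSet α (F i) ((C i : Set A))))) ≤
      ∑ i, ((F i).card : ℝ) *
        Real.log (Nat.card ↥(⇑(QuotientAddGroup.mk' (B i)) '' ((C i : Set A)))) := by
  have hne : Nonempty (Fin n) := ⟨⟨0, hn⟩⟩
  -- Part 1
  have h1 : ∀ i, trajSet α (F i) ((B i : Set A))
      = ((⨆ s ∈ F i, (B i).map (α s) : AddSubgroup A) : Set A) := by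
    intro i
    unfold trajSet
    rw [← aux_sum_coe_subgroups (F i) (hF i)]
    exact Finset.sum_congr rfl fun s _ => ((B i).coe_map (α s)).symm
  refine ⟨h1, ?_, ?_, ?_⟩
  -- Part 2
  · have : (∑ i, trajSet α (F i) ((B i : Set A)))
        = ∑ i, (((⨆ s ∈ F i, (B i).map (α s) : AddSubgroup A)) : Set A) :=
      Finset.sum_congr rfl fun i _ => h1 i
    rw [this, aux_sum_coe_subgroups Finset.univ Finset.univ_nonempty, hBsup]
    simp
  -- Part 3
  · have hfin : (∑ i, trajSet α (F i) ((C i : Set A))).Finite := by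
      apply aux_finite_sum
      intro i _
      exact aux_finite_sum _ _ fun s _ => (hC i).image _
    exact hfin.image _
  -- Part 4
  · set π := QuotientAddGroup.mk' Bsup with hπ
    -- cardinality bound for each (i, s)
    have key : ∀ i, ∀ s ∈ F i,
        Nat.card (⇑π '' (⇑(α s) '' (C i : Set A)))
          ≤ Nat.card (⇑(QuotientAddGroup.mk' (B i)) '' (C i : Set A)) := by
      intro i s hs
      have hle : (B i).map (α s) ≤ Bsup := by
        rw [hBsup]
        exact le_iSup_of_le i (le_iSup₂ (f := fun s (_ : s ∈ F i) => (B i).map (α s)) s hs)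
      have hker : ∀ b ∈ B i, (π.comp (α s)) b = 0 := by
        intro b hb
        have : α s b ∈ Bsup := hle ⟨b, hb, rfl⟩
        simpa [π, QuotientAddGroup.eq_zero_iff] using this
      set g := QuotientAddGroup.lift (B i) (π.comp (α s)) hker with hg
      have himg : ⇑π '' (⇑(α s) '' (C i : Set A))
          = ⇑g '' (⇑(QuotientAddGroup.mk' (B i)) '' (C i : Set A)) := by
        rw [← Set.image_comp, ← Set.image_comp]
        apply Set.image_congr'
        intro x
        rfl
      rw [himg]
      exact Nat.card_image_le ((hC i).image _)
    -- expand the image of the sum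
    have hexp : ⇑π '' (∑ i, trajSet α (F i) ((C i : Set A)))
        = ∑ i, ∑ s ∈ F i, ⇑π '' (⇑(α s) '' (C i : Set A)) := by
      rw [aux_image_sum]
      exact Finset.sum_congr rfl fun i _ => aux_image_sum π (F i) _
    -- natural number bound
    have hcard : Nat.card (⇑π '' (∑ i, trajSet α (F i) ((C i : Set A))))
        ≤ ∏ i, (Nat.card (⇑(QuotientAddGroup.mk' (B i)) '' (C i : Set A))) ^ (F i).card := by
      rw [hexp]
      calc Nat.card (∑ i, ∑ s ∈ F i, ⇑π '' (⇑(α s) '' (C i : Set A)) : Set _)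
          ≤ ∏ i, Nat.card (∑ s ∈ F i, ⇑π '' (⇑(α s) '' (C i : Set A)) : Set _) :=
            aux_card_sum_le _ _
        _ ≤ ∏ i, (Nat.card (⇑(QuotientAddGroup.mk' (B i)) '' (C i : Set A))) ^ (F i).card := by
            apply Finset.prod_le_prod (fun _ _ => Nat.zero_le _)
            intro i _
            calc Nat.card (∑ s ∈ F i, ⇑π '' (⇑(α s) '' (C i : Set A)) : Set _)
                ≤ ∏ s ∈ F i, Nat.card (⇑π '' (⇑(α s) '' (C i : Set A))) :=
                  aux_card_sum_le _ _
              _ ≤ ∏ s ∈ F i, Nat.card (⇑(QuotientAddGroup.mk' (B i)) '' (C i : Set A)) :=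
                  Finset.prod_le_prod (fun _ _ => Nat.zero_le _) (fun s hs => key i s hs)
              _ = _ := by rw [Finset.prod_const]
    -- positivity facts
    have hXfin : (∑ i, trajSet α (F i) ((C i : Set A))).Finite :=
      aux_finite_sum _ _ fun i _ => aux_finite_sum _ _ fun s _ => (hC i).image _
    have hXne : (∑ i, trajSet α (F i) ((C i : Set A))).Nonempty := by
      apply aux_nonempty_sum
      intro i _
      exact aux_nonempty_sum _ _ fun s _ => ⟨α s 0, 0, (C i).zero_mem, rfl⟩
    have hLpos : 0 < Nat.card (⇑π '' (∑ i, trajSet α (F i) ((C i : Set A)))) :=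
      (Set.natCard_pos (hXfin.image _)).mpr (hXne.image _)
    have hmpos : ∀ i, 0 < Nat.card (⇑(QuotientAddGroup.mk' (B i)) '' (C i : Set A)) :=
      fun i => (Set.natCard_pos ((hC i).image _)).mpr ⟨_, 0, (C i).zero_mem, rfl⟩
    -- take logs
    calc Real.log (Nat.card (⇑π '' (∑ i, trajSet α (F i) ((C i : Set A)))))
        ≤ Real.log (∏ i,
            (Nat.card (⇑(QuotientAddGroup.mk' (B i)) '' (C i : Set A)) : ℝ) ^ (F i).card) := by
          apply Real.log_le_log (by exact_mod_cast hLpos)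
          push_cast
          exact_mod_cast hcard
      _ = ∑ i, ((F i).card : ℝ) *
            Real.log (Nat.card (⇑(QuotientAddGroup.mk' (B i)) '' (C i : Set A))) := by
          rw [Real.log_prod]
          · exact Finset.sum_congr rfl fun i _ => Real.log_pow _ _
          · intro i _
            exact pow_ne_zero _ (by exact_mod_cast (hmpos i).ne')
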